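/- Fix x ∈ ℝⁿ, γ > 0, g = ∇f(x), a symmetric positive definite matrix D that is diagonal with respect to the index set I⁺ = {i : xⁱ = 0 and |gⁱ| < γ}, and define ω ∈ ℝⁿ by ωⁱ = γ if (xⁱ > 0 or (xⁱ = 0 and gⁱ ≤ -γ)), ωⁱ = -γ if (xⁱ < 0 or (xⁱ = 0 and gⁱ ≥ γ)), ωⁱ = 0 if i ∈ I⁺. Let p = D(g + ω) and define x(α) componentwise by: x(α)ⁱ = max{xⁱ - αpⁱ, 0} if xⁱ > 0 or (xⁱ=0 and gⁱ ≤ -γ); x(α)ⁱ = min{xⁱ - αpⁱ, 0} if xⁱ < 0 or (xⁱ=0 and gⁱ ≥ γ); x(α)ⁱ = 0 if i ∈ I⁺. Then x(α) = x for all α > 0 if and only if x satisfies the first-order conditions: ∇ᵢf(x) = -γ when xⁱ > 0, ∇ᵢf(x) ∈ [-γ,γ] when xⁱ = 0, and ∇ᵢf(x) = γ when xⁱ < 0. -/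

import Mathlib

open Matrix

/-- fixed points of the two-metric adaptive projection step are exactly
the first-order stationary points of ψ = f + γ‖·‖₁. -/
theorem stmt_15 (n : ℕ) (γ : ℝ) (hγ : 0 < γ)
    (f : (Fin n → ℝ) → ℝ) (hf : Differentiable ℝ f)
    (x : Fin n → ℝ) (g : Fin n → ℝ)
    (hg : ∀ i, g i = fderiv ℝ f x (Pi.single i 1))
    (D : Matrix (Fin n) (Fin n) ℝ) (hD : D.PosDef)
    (Iplus : Finset (Fin n))
    (hIplus : ∀ i, i ∈ Iplus ↔ x i = 0 ∧ |g i| < γ)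
    (hdiag : ∀ i ∈ Iplus, ∀ j, j ≠ i → D i j = 0)
    (ω : Fin n → ℝ)
    (hω : ∀ i, (0 < x i ∨ (x i = 0 ∧ g i ≤ -γ) → ω i = γ) ∧
      (x i < 0 ∨ (x i = 0 ∧ γ ≤ g i) → ω i = -γ) ∧
      (x i = 0 ∧ |g i| < γ → ω i = 0))
    (p : Fin n → ℝ) (hp : p = D.mulVec (g + ω))
    (xα : ℝ → Fin n → ℝ)
    (hxα : ∀ α i,
      (0 < x i ∨ (x i = 0 ∧ g i ≤ -γ) → xα α i = max (x i - α * p i) 0) ∧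
      (x i < 0 ∨ (x i = 0 ∧ γ ≤ g i) → xα α i = min (x i - α * p i) 0) ∧
      (x i = 0 ∧ |g i| < γ → xα α i = 0)) :
    (∀ α > 0, xα α = x) ↔
      ∀ i, (0 < x i → g i = -γ) ∧ (x i = 0 → -γ ≤ g i ∧ g i ≤ γ) ∧
        (x i < 0 → g i = γ) := by
  have hsymm : ∀ i j, D i j = D j i := fun i j => by
    have := hD.1.apply j i
    simpa using this
  constructor
  · -- forward direction
    intro hfix
    set v : Fin n → ℝ := g + ω with hv
    set w : Fin n → ℝ := fun i => if i ∈ Iplus then 0 else v i with hw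
    have hvdef : ∀ i, v i = g i + ω i := fun i => rfl
    -- sign information on p from fixed-point property
    have hpos : ∀ i, 0 < x i → p i = 0 := by
      intro i hxi
      have key : ∀ α > 0, max (x i - α * p i) 0 = x i := by
        intro α hα
        have h := (hxα α i).1 (Or.inl hxi)
        rw [hfix α hα] at h
        exact h.symm
      rcases lt_trichotomy (p i) 0 with hpi | hpi | hpi
      · have h1 := key 1 one_pos
        rw [max_eq_left (by nlinarith : (0:ℝ) ≤ x i - 1 * p i)] at h1
        linarith
      · exact hpi
      · have hαpos : 0 < x i / (2 * p i) := by positivity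
        have h1 := key (x i / (2 * p i)) hαpos
        have hval : x i - (x i / (2 * p i)) * p i = x i / 2 := by
          field_simp; ring
        rw [hval, max_eq_left (by linarith : (0:ℝ) ≤ x i / 2)] at h1
        linarith
    have hneg : ∀ i, x i < 0 → p i = 0 := by
      intro i hxi
      have key : ∀ α > 0, min (x i - α * p i) 0 = x i := by
        intro α hα
        have h := (hxα α i).2.1 (Or.inl hxi)
        rw [hfix α hα] at h
        exact h.symm
      rcases lt_trichotomy (p i) 0 with hpi | hpi | hpi
      · have h2pi : (2:ℝ) * p i ≠ 0 := by linarith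
        have hαpos : 0 < x i / (2 * p i) := div_pos_of_neg_of_neg hxi (by linarith)
        have h1 := key (x i / (2 * p i)) hαpos
        have hval : x i - (x i / (2 * p i)) * p i = x i / 2 := by
          rw [div_mul_eq_mul_div, mul_div_mul_right _ _ hpi.ne]; ring
        rw [hval, min_eq_left (by linarith : x i / 2 ≤ (0:ℝ))] at h1
        linarith
      · exact hpi
      · have h1 := key 1 one_pos
        rw [min_eq_left (by nlinarith : x i - 1 * p i ≤ (0:ℝ))] at h1
        linarith
    have hzneg : ∀ i, x i = 0 → g i ≤ -γ → 0 ≤ p i := by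
      intro i hxi hgi
      have h := (hxα 1 i).1 (Or.inr ⟨hxi, hgi⟩)
      rw [hfix 1 one_pos, hxi] at h
      by_contra hc
      push_neg at hc
      rw [max_eq_left (by linarith : (0:ℝ) ≤ 0 - 1 * p i)] at h
      linarith
    have hzpos : ∀ i, x i = 0 → γ ≤ g i → p i ≤ 0 := by
      intro i hxi hgi
      have h := (hxα 1 i).2.1 (Or.inr ⟨hxi, hgi⟩)
      rw [hfix 1 one_pos, hxi] at h
      by_contra hc
      push_neg at hc
      rw [min_eq_left (by linarith : 0 - 1 * p i ≤ (0:ℝ))] at h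
      linarith
    -- case split helper for i ∉ Iplus with x i = 0
    have hsplit : ∀ i, i ∉ Iplus → x i = 0 → g i ≤ -γ ∨ γ ≤ g i := by
      intro i hi hxi
      rw [hIplus i] at hi
      push_neg at hi
      have habs : γ ≤ |g i| := hi hxi
      rcases le_abs.mp habs with h | h
      · right; exact h
      · left; linarith
    -- each term w i * p i ≤ 0
    have hterm : ∀ i, w i * p i ≤ 0 := by
      intro i
      by_cases hi : i ∈ Iplus
      · simp [hw, hi]
      · simp only [hw, if_neg hi]
        rcases lt_trichotomy (x i) 0 with hxi | hxi | hxi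
        · rw [hneg i hxi]; simp
        · rcases hsplit i hi hxi with hgi | hgi
          · have hωi := (hω i).1 (Or.inr ⟨hxi, hgi⟩)
            have hvi : v i ≤ 0 := by rw [hvdef, hωi]; linarith
            exact mul_nonpos_of_nonpos_of_nonneg hvi (hzneg i hxi hgi)
          · have hωi := (hω i).2.1 (Or.inr ⟨hxi, hgi⟩)
            have hvi : 0 ≤ v i := by rw [hvdef, hωi]; linarith
            exact mul_nonpos_of_nonneg_of_nonpos hvi (hzpos i hxi hgi)
        · rw [hpos i hxi]; simp
    -- D *ᵥ w agrees with p off Iplus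
    have hmul : ∀ i, i ∉ Iplus → (D *ᵥ w) i = p i := by
      intro i hi
      rw [hp]
      simp only [mulVec, dotProduct]
      apply Finset.sum_congr rfl
      intro j _
      by_cases hj : j ∈ Iplus
      · have hji : j ≠ i := fun h => hi (h ▸ hj)
        simp [hsymm i j, hdiag j hj i hji.symm]
      · simp only [hw, if_neg hj]
    -- w ⬝ᵥ D *ᵥ w ≤ 0
    have hquad : w ⬝ᵥ (D *ᵥ w) ≤ 0 := by
      rw [dotProduct]
      apply Finset.sum_nonpos
      intro i _
      by_cases hi : i ∈ Iplus
      · simp [hw, hi]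
      · rw [hmul i hi]
        exact hterm i
    -- positive definiteness forces w = 0
    have hw0 : w = 0 := by
      by_contra hc
      have := hD.dotProduct_mulVec_pos hc
      rw [show star w = w from rfl] at this
      linarith
    have hvanish : ∀ i, i ∉ Iplus → g i + ω i = 0 := by
      intro i hi
      have := congrFun hw0 i
      simpa [hw, if_neg hi, hvdef] using this
    -- conclude
    intro i
    refine ⟨?_, ?_, ?_⟩
    · intro hxi
      have hi : i ∉ Iplus := by
        rw [hIplus i]; rintro ⟨h0, -⟩; linarith
      have hωi := (hω i).1 (Or.inl hxi)
      have := hvanish i hi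
      linarith
    · intro hxi
      by_cases habs : |g i| < γ
      · have := abs_lt.mp habs
        constructor <;> linarith
      · have hi : i ∉ Iplus := by
          rw [hIplus i]; rintro ⟨-, h⟩; exact habs h
        rcases hsplit i hi hxi with hgi | hgi
        · have hωi := (hω i).1 (Or.inr ⟨hxi, hgi⟩)
          have := hvanish i hi
          constructor <;> linarith
        · have hωi := (hω i).2.1 (Or.inr ⟨hxi, hgi⟩)
          have := hvanish i hi
          constructor <;> linarith
    · intro hxi
      have hi : i ∉ Iplus := by
        rw [hIplus i]; rintro ⟨h0, -⟩; linarith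
      have hωi := (hω i).2.1 (Or.inl hxi)
      have := hvanish i hi
      linarith
  · -- backward direction
    intro hcond
    have hvanish : ∀ i, i ∉ Iplus → g i + ω i = 0 := by
      intro i hi
      rcases lt_trichotomy (x i) 0 with hxi | hxi | hxi
      · have hgi := (hcond i).2.2 hxi
        have hωi := (hω i).2.1 (Or.inl hxi)
        rw [hgi, hωi]; ring
      · rw [hIplus i] at hi
        push_neg at hi
        have habs : γ ≤ |g i| := hi hxi
        have hbd := (hcond i).2.1 hxi
        rcases le_abs.mp habs with h | h
        · have hgi : g i = γ := le_antisymm hbd.2 h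
          have hωi := (hω i).2.1 (Or.inr ⟨hxi, h⟩)
          rw [hgi, hωi]; ring
        · have hgi : g i = -γ := le_antisymm (by linarith) hbd.1
          have hωi := (hω i).1 (Or.inr ⟨hxi, by linarith⟩)
          rw [hgi, hωi]; ring
      · have hgi := (hcond i).1 hxi
        have hωi := (hω i).1 (Or.inl hxi)
        rw [hgi, hωi]; ring
    have hpzero : ∀ i, i ∉ Iplus → p i = 0 := by
      intro i hi
      rw [hp]
      simp only [mulVec, dotProduct]
      apply Finset.sum_eq_zero
      intro j _
      by_cases hj : j ∈ Iplus
      · have hji : j ≠ i := fun h => hi (h ▸ hj)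
        rw [hsymm i j, hdiag j hj i hji.symm, zero_mul]
      · have : g j + ω j = 0 := hvanish j hj
        have hzj : (g + ω) j = 0 := this
        rw [hzj, mul_zero]
    intro α hα
    funext i
    by_cases hi : i ∈ Iplus
    · have hmem := (hIplus i).mp hi
      rw [(hxα α i).2.2 hmem, hmem.1]
    · have hpz := hpzero i hi
      rcases lt_trichotomy (x i) 0 with hxi | hxi | hxi
      · rw [(hxα α i).2.1 (Or.inl hxi), hpz]
        simp [min_eq_left hxi.le]
      · rw [hIplus i] at hi
        push_neg at hi
        have habs : γ ≤ |g i| := hi hxi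
        rcases le_abs.mp habs with h | h
        · rw [(hxα α i).2.1 (Or.inr ⟨hxi, h⟩), hpz, hxi]
          simp
        · rw [(hxα α i).1 (Or.inr ⟨hxi, by linarith⟩), hpz, hxi]
          simp
      · rw [(hxα α i).1 (Or.inl hxi), hpz]
        simp [max_eq_left hxi.le]
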